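/- For ℓ > 0 define |T_ℓ| := 1 + (1/2)·Σ_{i=1}^{∞} 2^i·tanh(ℓ/(2·3^i)), p(ℓ) := (1/2)·Σ_{i=−∞}^{∞} 2^i·tanh(ℓ/(2·3^i)) (a doubly infinite sum, which converges), and q₂(ℓ) := 1 − (1/2)·Σ_{i=0}^{∞} 2^{−i}·tanh(3^i·ℓ/2) (which converges). Then: (1) |T_ℓ| = p(ℓ) + q₂(ℓ) for all ℓ > 0; (2) p(3ℓ) = 2·p(ℓ) for all ℓ > 0; (3) q₂(ℓ) → 0 as ℓ → ∞; (4) p and q₂ are the unique pair of functions on ℝ_{>0} satisfying (1), (2) and (3). -/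

import Mathlib

set_option maxHeartbeats 1000000


open Filter Topology

private lemma my_tanh_lt_one (x : ℝ) : Real.tanh x < 1 := by
  rw [Real.tanh_eq_sinh_div_cosh, div_lt_one (Real.cosh_pos x)]
  rw [Real.sinh_eq, Real.cosh_eq]
  have := Real.exp_pos (-x); linarith

private lemma my_tanh_nonneg {x : ℝ} (hx : 0 ≤ x) : 0 ≤ Real.tanh x := by
  rw [Real.tanh_eq_sinh_div_cosh]
  exact div_nonneg (Real.sinh_nonneg_iff.mpr hx) (Real.cosh_pos x).le

private lemma my_tanh_le {x : ℝ} (hx : 0 ≤ x) : Real.tanh x ≤ 2 * x := by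
  rw [Real.tanh_eq_sinh_div_cosh, div_le_iff₀ (Real.cosh_pos x), Real.sinh_eq, Real.cosh_eq]
  have h1 : Real.exp (-x) * Real.exp x = 1 := by rw [← Real.exp_add]; simp
  have h2 : (-(2*x)) + 1 ≤ Real.exp (-(2*x)) := Real.add_one_le_exp _
  have h3 : Real.exp (-(2*x)) = Real.exp (-x) * Real.exp (-x) := by
    rw [← Real.exp_add]; ring_nf
  have h4 := Real.exp_pos x
  have h5 := Real.exp_pos (-x)
  have key : Real.exp x * (1 + -(2*x)) ≤ Real.exp x * (Real.exp (-x) * Real.exp (-x)) := by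
    rw [← h3]; exact mul_le_mul_of_nonneg_left (by linarith) h4.le
  have key2 : Real.exp x * (Real.exp (-x) * Real.exp (-x)) = Real.exp (-x) := by
    rw [← Real.exp_add, ← Real.exp_add]; norm_num
  nlinarith [mul_nonneg hx h5.le]

private lemma my_one_sub_tanh_le (x : ℝ) : 1 - Real.tanh x ≤ 2 * Real.exp (-(2*x)) := by
  have hc := Real.cosh_pos x
  rw [Real.tanh_eq_sinh_div_cosh]
  have h : 1 - Real.sinh x / Real.cosh x = (Real.cosh x - Real.sinh x) / Real.cosh x := by
    field_simp
  rw [h, div_le_iff₀ hc]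
  have h3 : Real.exp (-(2*x)) = Real.exp (-x) * Real.exp (-x) := by
    rw [← Real.exp_add]; ring_nf
  have h5 := (Real.exp_pos (-x)).le
  rw [Real.sinh_eq, Real.cosh_eq, h3]
  have key : Real.exp (-x) * Real.exp (-x) * Real.exp x = Real.exp (-x) := by
    rw [← Real.exp_add, ← Real.exp_add]; norm_num
  nlinarith [mul_nonneg (mul_nonneg h5 h5) h5]

private lemma sumFnat (ℓ : ℝ) (hℓ : 0 < ℓ) :
    Summable (fun n : ℕ => (2:ℝ)^((n:ℤ)) * Real.tanh (ℓ / (2 * (3:ℝ)^((n:ℤ))))) := by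
  apply Summable.of_nonneg_of_le (f := fun n : ℕ => ℓ * ((2:ℝ)/3)^n)
  · intro n; exact mul_nonneg (by positivity) (my_tanh_nonneg (by positivity))
  · intro n
    have harg : (0:ℝ) ≤ ℓ / (2 * (3:ℝ)^((n:ℤ))) := by positivity
    calc (2:ℝ)^((n:ℤ)) * Real.tanh (ℓ / (2 * (3:ℝ)^((n:ℤ))))
        ≤ (2:ℝ)^((n:ℤ)) * (2 * (ℓ / (2 * (3:ℝ)^((n:ℤ))))) :=
          mul_le_mul_of_nonneg_left (my_tanh_le harg) (by positivity)
      _ = ℓ * ((2:ℝ)/3)^n := by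
          rw [zpow_natCast, zpow_natCast, div_pow]
          have h3 : (3:ℝ)^n ≠ 0 := by positivity
          field_simp
  · exact (summable_geometric_of_lt_one (by norm_num) (by norm_num)).mul_left ℓ

private lemma sumG (ℓ : ℝ) (hℓ : 0 < ℓ) :
    Summable (fun n : ℕ => ((2:ℝ)^n)⁻¹ * Real.tanh ((3:ℝ)^n * ℓ / 2)) := by
  apply Summable.of_nonneg_of_le (f := fun n : ℕ => ((2:ℝ)⁻¹)^n)
  · intro n; exact mul_nonneg (by positivity) (my_tanh_nonneg (by positivity))
  · intro n
    rw [inv_pow]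
    calc ((2:ℝ)^n)⁻¹ * Real.tanh ((3:ℝ)^n * ℓ / 2)
        ≤ ((2:ℝ)^n)⁻¹ * 1 := mul_le_mul_of_nonneg_left (my_tanh_lt_one _).le (by positivity)
      _ = ((2:ℝ)^n)⁻¹ := mul_one _
  · exact summable_geometric_of_lt_one (by norm_num) (by norm_num)

private lemma FG (ℓ : ℝ) (n : ℕ) :
    (2:ℝ)^(-(n:ℤ)) * Real.tanh (ℓ / (2 * (3:ℝ)^(-(n:ℤ))))
      = ((2:ℝ)^n)⁻¹ * Real.tanh ((3:ℝ)^n * ℓ / 2) := by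
  rw [zpow_neg, zpow_neg, zpow_natCast, zpow_natCast]
  have harg : ℓ / (2 * ((3:ℝ)^n)⁻¹) = (3:ℝ)^n * ℓ / 2 := by
    have h3 : (3:ℝ)^n ≠ 0 := by positivity
    field_simp
  rw [harg]

private lemma Zsum (ℓ : ℝ) (hℓ : 0 < ℓ) :
    ∑' i : ℤ, (2:ℝ)^i * Real.tanh (ℓ / (2 * (3:ℝ)^i))
      = (∑' i : ℕ, (2:ℝ)^(i+1) * Real.tanh (ℓ / (2 * 3^(i+1))))
        + ∑' i : ℕ, ((2:ℝ)^i)⁻¹ * Real.tanh ((3:ℝ)^i * ℓ / 2) := by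
  have hs1 : Summable (fun n : ℕ => (2:ℝ)^((n:ℤ)) * Real.tanh (ℓ / (2 * (3:ℝ)^((n:ℤ))))) :=
    sumFnat ℓ hℓ
  have hs2 : Summable (fun n : ℕ => (2:ℝ)^(-(n:ℤ)) * Real.tanh (ℓ / (2 * (3:ℝ)^(-(n:ℤ))))) :=
    (sumG ℓ hℓ).congr fun n => (FG ℓ n).symm
  rw [Summable.tsum_of_nat_of_neg hs1 hs2]
  have e1 : (∑' n : ℕ, (2:ℝ)^((n:ℤ)) * Real.tanh (ℓ / (2 * (3:ℝ)^((n:ℤ)))))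
      = (2:ℝ)^(((0:ℕ):ℤ)) * Real.tanh (ℓ / (2 * (3:ℝ)^(((0:ℕ):ℤ))))
        + ∑' i : ℕ, (2:ℝ)^(i+1) * Real.tanh (ℓ / (2 * 3^(i+1))) := by
    rw [Summable.tsum_eq_zero_add hs1]
    refine congrArg₂ (· + ·) rfl (tsum_congr fun n => ?_)
    norm_cast
  have e2 : (∑' n : ℕ, (2:ℝ)^(-(n:ℤ)) * Real.tanh (ℓ / (2 * (3:ℝ)^(-(n:ℤ)))))
      = ∑' i : ℕ, ((2:ℝ)^i)⁻¹ * Real.tanh ((3:ℝ)^i * ℓ / 2) :=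
    tsum_congr fun n => FG ℓ n
  rw [e1, e2]
  norm_num
  ring

private lemma Zshift (ℓ : ℝ) : ∑' i : ℤ, (2:ℝ)^i * Real.tanh (3 * ℓ / (2 * (3:ℝ)^i))
    = 2 * ∑' i : ℤ, (2:ℝ)^i * Real.tanh (ℓ / (2 * (3:ℝ)^i)) := by
  rw [← tsum_mul_left,
    ← (Equiv.addRight (1:ℤ)).tsum_eq (fun i => (2:ℝ)^i * Real.tanh (3 * ℓ / (2 * (3:ℝ)^i)))]
  apply tsum_congr
  intro i
  simp only [Equiv.coe_addRight]
  have h2 : (2:ℝ)^(i+1) = 2 * (2:ℝ)^i := by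
    rw [zpow_add_one₀ (by norm_num : (2:ℝ) ≠ 0)]; ring
  have h3 : 3 * ℓ / (2 * (3:ℝ)^(i+1)) = ℓ / (2 * (3:ℝ)^i) := by
    rw [zpow_add_one₀ (by norm_num : (3:ℝ) ≠ 0)]
    have h30 : (3:ℝ)^i ≠ 0 := zpow_ne_zero _ (by norm_num)
    field_simp
  rw [h2, h3]
  ring

/-- Decomposition of the magnitude of the Cantor set: with
`|T_ℓ| = 1 + ½ Σ_{i=1}^∞ 2^i tanh(ℓ/(2·3^i))`,
`p(ℓ) = ½ Σ_{i=-∞}^∞ 2^i tanh(ℓ/(2·3^i))` (a convergent doubly infinite sum) and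
`q₂(ℓ) = 1 − ½ Σ_{i=0}^∞ 2^{−i} tanh(3^i ℓ/2)` (convergent), one has
(1) `|T_ℓ| = p(ℓ) + q₂(ℓ)`, (2) `p(3ℓ) = 2 p(ℓ)`, (3) `q₂(ℓ) → 0` as `ℓ → ∞`,
and (4) `p, q₂` are the unique pair of functions on the positive reals with these
properties. -/
theorem cantor_magnitude_decomposition (T p q₂ : ℝ → ℝ)
    (hT : ∀ ℓ : ℝ, 0 < ℓ →
      T ℓ = 1 + (1 / 2) * ∑' i : ℕ, (2 : ℝ) ^ (i + 1) * Real.tanh (ℓ / (2 * 3 ^ (i + 1))))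
    (hp : ∀ ℓ : ℝ, 0 < ℓ →
      p ℓ = (1 / 2) * ∑' i : ℤ, (2 : ℝ) ^ i * Real.tanh (ℓ / (2 * (3 : ℝ) ^ i)))
    (hq : ∀ ℓ : ℝ, 0 < ℓ →
      q₂ ℓ = 1 - (1 / 2) * ∑' i : ℕ, ((2 : ℝ) ^ i)⁻¹ * Real.tanh ((3 : ℝ) ^ i * ℓ / 2)) :
    (∀ ℓ : ℝ, 0 < ℓ →
      Summable (fun i : ℤ => (2 : ℝ) ^ i * Real.tanh (ℓ / (2 * (3 : ℝ) ^ i)))) ∧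
    (∀ ℓ : ℝ, 0 < ℓ →
      Summable (fun i : ℕ => ((2 : ℝ) ^ i)⁻¹ * Real.tanh ((3 : ℝ) ^ i * ℓ / 2))) ∧
    (∀ ℓ : ℝ, 0 < ℓ → T ℓ = p ℓ + q₂ ℓ) ∧
    (∀ ℓ : ℝ, 0 < ℓ → p (3 * ℓ) = 2 * p ℓ) ∧
    Tendsto q₂ atTop (𝓝 0) ∧
    (∀ p' q' : ℝ → ℝ,
      (∀ ℓ : ℝ, 0 < ℓ → T ℓ = p' ℓ + q' ℓ) →
      (∀ ℓ : ℝ, 0 < ℓ → p' (3 * ℓ) = 2 * p' ℓ) →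
      Tendsto q' atTop (𝓝 0) →
      ∀ ℓ : ℝ, 0 < ℓ → p' ℓ = p ℓ ∧ q' ℓ = q₂ ℓ) := by
  -- Summability over ℤ
  have hZsummable : ∀ ℓ : ℝ, 0 < ℓ →
      Summable (fun i : ℤ => (2 : ℝ) ^ i * Real.tanh (ℓ / (2 * (3 : ℝ) ^ i))) := by
    intro ℓ hℓ
    exact Summable.of_nat_of_neg (sumFnat ℓ hℓ) ((sumG ℓ hℓ).congr fun n => (FG ℓ n).symm)
  -- part 1
  have hdecomp : ∀ ℓ : ℝ, 0 < ℓ → T ℓ = p ℓ + q₂ ℓ := by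
    intro ℓ hℓ
    rw [hT ℓ hℓ, hp ℓ hℓ, hq ℓ hℓ, Zsum ℓ hℓ]
    ring
  -- part 2
  have hscale : ∀ ℓ : ℝ, 0 < ℓ → p (3 * ℓ) = 2 * p ℓ := by
    intro ℓ hℓ
    rw [hp (3 * ℓ) (by linarith), hp ℓ hℓ, Zshift ℓ]
    ring
  -- bounds on q₂
  have hq2bounds : ∀ ℓ : ℝ, 0 < ℓ → 0 ≤ q₂ ℓ ∧ q₂ ℓ ≤ 2 * Real.exp (-ℓ) := by
    intro ℓ hℓ
    have hB := sumG ℓ hℓ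
    have hgeo : Summable (fun n : ℕ => ((2:ℝ)⁻¹)^n) :=
      summable_geometric_of_lt_one (by norm_num) (by norm_num)
    have h2 : ∑' n : ℕ, ((2:ℝ)⁻¹)^n = 2 := by
      rw [tsum_geometric_of_lt_one (by norm_num) (by norm_num)]; norm_num
    have hup : (∑' n : ℕ, ((2:ℝ)^n)⁻¹ * Real.tanh ((3:ℝ)^n * ℓ / 2)) ≤ 2 := by
      refine le_trans (Summable.tsum_le_tsum (fun n => ?_) hB hgeo) (le_of_eq h2)
      rw [inv_pow]
      calc ((2:ℝ)^n)⁻¹ * Real.tanh ((3:ℝ)^n * ℓ / 2)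
          ≤ ((2:ℝ)^n)⁻¹ * 1 := mul_le_mul_of_nonneg_left (my_tanh_lt_one _).le (by positivity)
        _ = ((2:ℝ)^n)⁻¹ := mul_one _
    have hlow : 2 - 4 * Real.exp (-ℓ)
        ≤ ∑' n : ℕ, ((2:ℝ)^n)⁻¹ * Real.tanh ((3:ℝ)^n * ℓ / 2) := by
      have hsum2 : Summable (fun n : ℕ => ((2:ℝ)⁻¹)^n * (1 - 2 * Real.exp (-ℓ))) :=
        hgeo.mul_right _
      have hv : ∑' n : ℕ, ((2:ℝ)⁻¹)^n * (1 - 2 * Real.exp (-ℓ)) = 2 - 4 * Real.exp (-ℓ) := by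
        rw [tsum_mul_right, h2]; ring
      rw [← hv]
      refine Summable.tsum_le_tsum (fun n => ?_) hsum2 hB
      rw [inv_pow]
      refine mul_le_mul_of_nonneg_left ?_ (by positivity)
      have ht := my_one_sub_tanh_le ((3:ℝ)^n * ℓ / 2)
      have he : -(2 * ((3:ℝ)^n * ℓ / 2)) = -((3:ℝ)^n * ℓ) := by ring
      rw [he] at ht
      have hmono : Real.exp (-((3:ℝ)^n * ℓ)) ≤ Real.exp (-ℓ) := by
        apply Real.exp_le_exp.mpr
        have h1 : ℓ ≤ (3:ℝ)^n * ℓ := le_mul_of_one_le_left hℓ.le (one_le_pow₀ (by norm_num))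
        linarith
      linarith
    rw [hq ℓ hℓ]
    constructor <;> linarith
  -- part 3
  have htend : Tendsto q₂ atTop (𝓝 0) := by
    refine squeeze_zero' (g := fun ℓ : ℝ => 2 * Real.exp (-ℓ)) (Filter.eventually_atTop.2 ⟨1, fun ℓ hℓ => ?_⟩)
      (Filter.eventually_atTop.2 ⟨1, fun ℓ hℓ => ?_⟩) ?_
    · exact (hq2bounds ℓ (by linarith)).1
    · exact (hq2bounds ℓ (by linarith)).2
    · simpa using Real.tendsto_exp_neg_atTop_nhds_zero.const_mul (2:ℝ)
  refine ⟨hZsummable, fun ℓ hℓ => sumG ℓ hℓ, hdecomp, hscale, htend, ?_⟩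
  -- part 4: uniqueness
  intro p' q' h1 h2 h3 ℓ hℓ
  have hpq : ∀ m : ℝ, 0 < m → p' m - p m = q₂ m - q' m := by
    intro m hm
    have ha := hdecomp m hm
    have hb := h1 m hm
    linarith
  have hpow : ∀ n : ℕ, (0:ℝ) < (3:ℝ)^n * ℓ := fun n => by positivity
  have hiter : ∀ n : ℕ, p' ((3:ℝ)^n * ℓ) - p ((3:ℝ)^n * ℓ) = 2^n * (p' ℓ - p ℓ) := by
    intro n
    induction n with
    | zero => simp
    | succ n ih =>
      have hm : (3:ℝ)^(n+1) * ℓ = 3 * ((3:ℝ)^n * ℓ) := by ring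
      rw [hm, h2 _ (hpow n), hscale _ (hpow n)]
      rw [pow_succ]
      linarith
  have hseq : ∀ n : ℕ, p' ℓ - p ℓ = ((2:ℝ)⁻¹)^n * (q₂ ((3:ℝ)^n * ℓ) - q' ((3:ℝ)^n * ℓ)) := by
    intro n
    rw [← hpq _ (hpow n), hiter n]
    have hinv : ((2:ℝ)⁻¹)^n * (2:ℝ)^n = 1 := by
      rw [← mul_pow]; norm_num
    rw [← mul_assoc, hinv, one_mul]
  have t1 : Tendsto (fun n : ℕ => (3:ℝ)^n * ℓ) atTop atTop :=
    (tendsto_pow_atTop_atTop_of_one_lt (by norm_num : (1:ℝ) < 3)).atTop_mul_const hℓ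
  have t2 : Tendsto (fun n : ℕ => q₂ ((3:ℝ)^n * ℓ) - q' ((3:ℝ)^n * ℓ)) atTop (𝓝 0) := by
    have := (htend.sub h3).comp t1
    simpa [Function.comp_def] using this
  have t3 : Tendsto (fun n : ℕ => ((2:ℝ)⁻¹)^n) atTop (𝓝 0) :=
    tendsto_pow_atTop_nhds_zero_of_lt_one (by norm_num) (by norm_num)
  have t4 : Tendsto (fun n : ℕ =>
      ((2:ℝ)⁻¹)^n * (q₂ ((3:ℝ)^n * ℓ) - q' ((3:ℝ)^n * ℓ))) atTop (𝓝 0) := by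
    simpa using t3.mul t2
  have hd0 : p' ℓ - p ℓ = 0 :=
    tendsto_nhds_unique (tendsto_const_nhds.congr hseq) t4
  have hpℓ : p' ℓ = p ℓ := by linarith
  refine ⟨hpℓ, ?_⟩
  have := hpq ℓ hℓ
  linarith
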